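/- (Theorem 3, part ii) Under Assumptions 1 and 2, let the AGT stepsize satisfy 0 < γ < 2/L, so that ρ := max{|1−γm|, |1−γL|} < 1, and define σ := 1 + h·(C₀C₁/m² + C₂/m). If the sampling period satisfies ρ^τ·σ < 1, i.e. h < (C₀C₁/m² + C₂/m)⁻¹·(ρ^{−τ} − 1), then the AGT iterates satisfy, for every k ≥ 0: ‖x_k − x*(t_k)‖ ≤ (ρ^τσ)^k·‖x₀ − x*(t₀)‖ + ρ^τ·(h²/2)·(C₀²C₁/m³ + 2C₀C₂/m² + 2C₃/m)·(1 − (ρ^τσ)^k)/(1 − ρ^τσ). -/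

import Mathlib

noncomputable section

/-- The setting of a time-varying, smooth, strongly convex optimization problem
`min_{x ∈ ℝⁿ} f(x;t)`, bundling the objective `f`, its derivatives, the Hessian
inverse, the optimal trajectory `x*(t)`, and Assumptions 1 and 2 of the paper. -/
structure TVOpt (n : ℕ) where
  /-- the objective `f(x;t)` -/
  f : EuclideanSpace ℝ (Fin n) → ℝ → ℝ
  /-- the gradient `∇ₓ f(x;t)` -/
  grad : EuclideanSpace ℝ (Fin n) → ℝ → EuclideanSpace ℝ (Fin n)
  /-- the Hessian `∇ₓₓ f(x;t)` -/
  hess : EuclideanSpace ℝ (Fin n) → ℝ →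
    EuclideanSpace ℝ (Fin n) →L[ℝ] EuclideanSpace ℝ (Fin n)
  /-- the Hessian inverse `[∇ₓₓ f(x;t)]⁻¹` -/
  hessInv : EuclideanSpace ℝ (Fin n) → ℝ →
    EuclideanSpace ℝ (Fin n) →L[ℝ] EuclideanSpace ℝ (Fin n)
  /-- the mixed partial derivative `∇_{tx} f(x;t)` -/
  dtgrad : EuclideanSpace ℝ (Fin n) → ℝ → EuclideanSpace ℝ (Fin n)
  /-- the third derivative tensor `∇ₓₓₓ f(x;t)` -/
  d3 : EuclideanSpace ℝ (Fin n) → ℝ →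
    EuclideanSpace ℝ (Fin n) →L[ℝ] EuclideanSpace ℝ (Fin n) →L[ℝ] EuclideanSpace ℝ (Fin n)
  /-- the time derivative of the Hessian `∇_{xtx} f(x;t)` -/
  dthess : EuclideanSpace ℝ (Fin n) → ℝ →
    EuclideanSpace ℝ (Fin n) →L[ℝ] EuclideanSpace ℝ (Fin n)
  /-- the second time derivative of the gradient `∇_{ttx} f(x;t)` -/
  dttgrad : EuclideanSpace ℝ (Fin n) → ℝ → EuclideanSpace ℝ (Fin n)
  /-- the optimal trajectory `x*(t)` -/
  xstar : ℝ → EuclideanSpace ℝ (Fin n)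
  /-- strong convexity constant -/
  m : ℝ
  /-- Hessian norm bound (gradient Lipschitz constant) -/
  L : ℝ
  C0 : ℝ
  C1 : ℝ
  C2 : ℝ
  C3 : ℝ
  m_pos : 0 < m
  grad_spec : ∀ (x : EuclideanSpace ℝ (Fin n)) (t : ℝ), HasGradientAt (fun y => f y t) (grad x t) x
  hess_spec : ∀ (x : EuclideanSpace ℝ (Fin n)) (t : ℝ), HasFDerivAt (fun y => grad y t) (hess x t) x
  dtgrad_spec : ∀ (x : EuclideanSpace ℝ (Fin n)) (t : ℝ), HasDerivAt (fun s => grad x s) (dtgrad x t) t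
  d3_spec : ∀ (x : EuclideanSpace ℝ (Fin n)) (t : ℝ), HasFDerivAt (fun y => hess y t) (d3 x t) x
  dthess_spec : ∀ (x : EuclideanSpace ℝ (Fin n)) (t : ℝ), HasDerivAt (fun s => hess x s) (dthess x t) t
  dttgrad_spec : ∀ (x : EuclideanSpace ℝ (Fin n)) (t : ℝ), HasDerivAt (fun s => dtgrad x s) (dttgrad x t) t
  /-- Assumption 1: `∇ₓₓ f(x;t) ⪰ m·I` uniformly in `x` and `t`. -/
  strong_convex : ∀ (x : EuclideanSpace ℝ (Fin n)) (t : ℝ) (v : EuclideanSpace ℝ (Fin n)),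
    m * ‖v‖ ^ 2 ≤ @inner ℝ _ _ v (hess x t v)
  hessInv_left : ∀ (x : EuclideanSpace ℝ (Fin n)) (t : ℝ), ContinuousLinearMap.comp (hessInv x t) (hess x t) =
    ContinuousLinearMap.id ℝ (EuclideanSpace ℝ (Fin n))
  hessInv_right : ∀ (x : EuclideanSpace ℝ (Fin n)) (t : ℝ), ContinuousLinearMap.comp (hess x t) (hessInv x t) =
    ContinuousLinearMap.id ℝ (EuclideanSpace ℝ (Fin n))
  /-- Assumption 2: bounded derivatives, uniformly in `x` and `t`. -/
  hess_bound : ∀ (x : EuclideanSpace ℝ (Fin n)) (t : ℝ), ‖hess x t‖ ≤ L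
  dtgrad_bound : ∀ (x : EuclideanSpace ℝ (Fin n)) (t : ℝ), ‖dtgrad x t‖ ≤ C0
  d3_bound : ∀ (x : EuclideanSpace ℝ (Fin n)) (t : ℝ), ‖d3 x t‖ ≤ C1
  dthess_bound : ∀ (x : EuclideanSpace ℝ (Fin n)) (t : ℝ), ‖dthess x t‖ ≤ C2
  dttgrad_bound : ∀ (x : EuclideanSpace ℝ (Fin n)) (t : ℝ), ‖dttgrad x t‖ ≤ C3
  /-- `x*(t)` minimizes `f(·;t)` -/
  xstar_min : ∀ t : ℝ, IsMinOn (fun x => f x t) Set.univ (xstar t)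
  /-- equivalently, `∇ₓ f(x*(t);t) = 0` -/
  xstar_grad : ∀ t : ℝ, grad (xstar t) t = 0


section AuxLemmas

open Set

section Helpers

variable {E : Type*} [NormedAddCommGroup E] [NormedSpace ℝ E]

/-- Quadratic Taylor remainder on `[0,1]` from a linear bound on derivative increments. -/
lemma quad01 (f f' : ℝ → E) (hder : ∀ r, HasDerivAt f (f' r) r) (C : ℝ)
    (hLip : ∀ r ∈ Icc (0:ℝ) 1, ‖f' r - f' 0‖ ≤ C * r) :
    ‖f 1 - f 0 - f' 0‖ ≤ C / 2 := by
  set g : ℝ → E := fun r => f r - r • f' 0 - f 0 with hg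
  have hg' : ∀ r, HasDerivAt g (f' r - f' 0) r := by
    intro r
    have h1 : HasDerivAt (fun r : ℝ => r • f' 0) (f' 0) r := by
      simpa using (hasDerivAt_id r).smul_const (f' 0)
    exact ((hder r).sub h1).sub_const (f 0)
  have hB : ∀ r : ℝ, HasDerivAt (fun r : ℝ => C / 2 * r ^ 2) (C * r) r := by
    intro r
    have : HasDerivAt (fun r : ℝ => C / 2 * r ^ 2) (C / 2 * (2 * r)) r := by
      simpa using (hasDerivAt_pow 2 r).const_mul (C / 2)
    convert this using 1; ring
  have key := image_norm_le_of_norm_deriv_right_le_deriv_boundary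
    (f := g) (f' := fun r => f' r - f' 0) (a := 0) (b := 1)
    (B := fun r => C / 2 * r ^ 2) (B' := fun r => C * r)
    (fun r _ => (hg' r).continuousAt.continuousWithinAt)
    (fun r _ => (hg' r).hasDerivWithinAt)
    (by simp [hg]) hB
    (fun r hr => hLip r (Ico_subset_Icc_self hr))
  have h1 := key (by norm_num : (1:ℝ) ∈ Icc (0:ℝ) 1)
  have : g 1 = f 1 - f 0 - f' 0 := by simp [hg]; abel
  rw [this] at h1
  simpa using h1

end Helpers

open Set
section SA
variable {E : Type*} [NormedAddCommGroup E] [InnerProductSpace ℝ E]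

lemma selfadj_opNorm_le (A : E →L[ℝ] E)
    (symm : ∀ v w : E, @inner ℝ _ _ (A v) w = @inner ℝ _ _ v (A w))
    (c : ℝ) (hc : 0 ≤ c) (hq : ∀ v : E, |@inner ℝ _ _ (A v) v| ≤ c * ‖v‖ ^ 2) :
    ‖A‖ ≤ c := by
  refine A.opNorm_le_bound hc (fun v => ?_)
  rcases eq_or_ne (A v) 0 with h0 | h0
  · simp [h0, mul_nonneg hc (norm_nonneg v)]
  have hAv : (0:ℝ) < ‖A v‖ := norm_pos_iff.mpr h0
  set w : E := (‖v‖ / ‖A v‖) • A v with hw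
  have hwn : ‖w‖ = ‖v‖ := by
    rw [hw, norm_smul]
    rw [Real.norm_eq_abs, abs_div, abs_of_nonneg (norm_nonneg v), abs_of_nonneg (norm_nonneg _)]
    field_simp
  have hip : @inner ℝ _ _ (A v) w = ‖v‖ * ‖A v‖ := by
    rw [hw, real_inner_smul_right, real_inner_self_eq_norm_sq]
    field_simp
  -- polarization
  have pol : (4:ℝ) * @inner ℝ _ _ (A v) w
      = @inner ℝ _ _ (A (v + w)) (v + w) - @inner ℝ _ _ (A (v - w)) (v - w) := by
    have h1 : @inner ℝ _ _ (A w) v = @inner ℝ _ _ (A v) w := by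
      rw [symm w v, real_inner_comm]
    simp only [map_add, map_sub, inner_add_left, inner_add_right, inner_sub_left,
      inner_sub_right, h1]
    ring
  have hbound : (4:ℝ) * (‖v‖ * ‖A v‖) ≤ c * ‖v + w‖ ^ 2 + c * ‖v - w‖ ^ 2 := by
    rw [← hip, pol]
    have h1 := (abs_le.mp (hq (v + w))).2
    have h2 := (abs_le.mp (hq (v - w))).1
    linarith
  have hpar : ‖v + w‖ ^ 2 + ‖v - w‖ ^ 2 = 2 * (‖v‖ ^ 2 + ‖w‖ ^ 2) := by
    have := parallelogram_law_with_norm ℝ v w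
    nlinarith [this]
  have : (4:ℝ) * (‖v‖ * ‖A v‖) ≤ 4 * c * ‖v‖ ^ 2 := by
    have : c * ‖v + w‖ ^ 2 + c * ‖v - w‖ ^ 2 = c * (‖v + w‖ ^ 2 + ‖v - w‖ ^ 2) := by ring
    rw [this, hpar, hwn] at hbound
    nlinarith
  have hv : (0:ℝ) < ‖v‖ := by
    rcases eq_or_lt_of_le (norm_nonneg v) with h | h
    · exfalso; apply h0; rw [show v = 0 from norm_eq_zero.mp h.symm]; simp
    · exact h
  nlinarith
end SA

end AuxLemmas

open Set

set_option synthInstance.maxHeartbeats 1000000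
set_option maxHeartbeats 1000000

namespace TVOpt

variable {n : ℕ} (P : TVOpt n)

local notation "EE" => EuclideanSpace ℝ (Fin n)

lemma C0_nonneg : 0 ≤ P.C0 := le_trans (norm_nonneg _) (P.dtgrad_bound 0 0)
lemma C1_nonneg : 0 ≤ P.C1 := le_trans (norm_nonneg (P.d3 0 0)) (P.d3_bound 0 0)
lemma C2_nonneg : 0 ≤ P.C2 := le_trans (norm_nonneg _) (P.dthess_bound 0 0)
lemma C3_nonneg : 0 ≤ P.C3 := le_trans (norm_nonneg _) (P.dttgrad_bound 0 0)

lemma inner_hess_le (x : EE) (t : ℝ) (v : EE) :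
    @inner ℝ _ _ v (P.hess x t v) ≤ P.L * ‖v‖ ^ 2 := by
  calc @inner ℝ _ _ v (P.hess x t v) ≤ ‖v‖ * ‖P.hess x t v‖ := real_inner_le_norm _ _
    _ ≤ ‖v‖ * (‖P.hess x t‖ * ‖v‖) := by
        gcongr; exact (P.hess x t).le_opNorm v
    _ ≤ ‖v‖ * (P.L * ‖v‖) := by
        have := P.hess_bound x t
        gcongr
    _ = P.L * ‖v‖ ^ 2 := by ring

lemma m_le_L (hn : 0 < n) : P.m ≤ P.L := by
  set v : EE := EuclideanSpace.single ⟨0, hn⟩ (1:ℝ) with hv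
  have hvn : ‖v‖ = 1 := by simp [hv, EuclideanSpace.norm_single]
  have h1 := P.strong_convex 0 0 v
  have h2 := P.inner_hess_le 0 0 v
  rw [hvn] at h1 h2
  simpa using le_trans h1 h2

lemma hess_symm (x : EE) (t : ℝ) (v w : EE) :
    @inner ℝ _ _ (P.hess x t v) w = @inner ℝ _ _ v (P.hess x t w) := by
  classical
  set D := InnerProductSpace.toDual ℝ (EuclideanSpace ℝ (Fin n)) with hD
  have hf : ∀ y : EE, HasFDerivAt (fun z => P.f z t) (D (P.grad y t)) y :=
    fun y => (P.grad_spec y t).hasFDerivAt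
  have hD2 : HasFDerivAt (fun y => D (P.grad y t))
      ((D.toContinuousLinearEquiv.toContinuousLinearMap).comp (P.hess x t)) x :=
    (D.toContinuousLinearEquiv.toContinuousLinearMap.hasFDerivAt).comp x (P.hess_spec x t)
  have := second_derivative_symmetric hf hD2 v w
  simp only [ContinuousLinearMap.comp_apply] at this
  have hv : ∀ a b : EE, (D.toContinuousLinearEquiv.toContinuousLinearMap a) b
      = @inner ℝ _ _ a b := by
    intro a b; simp [hD, InnerProductSpace.toDual_apply_apply]
  rw [hv, hv] at this
  rw [this, real_inner_comm]


lemma contraction_op (γ ρ : ℝ) (hγ : 0 ≤ γ)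
    (hρm : |1 - γ * P.m| ≤ ρ) (hρL : |1 - γ * P.L| ≤ ρ) (x : EE) (t : ℝ) :
    ‖ContinuousLinearMap.id ℝ (EuclideanSpace ℝ (Fin n)) - γ • P.hess x t‖ ≤ ρ := by
  have hρ : 0 ≤ ρ := le_trans (abs_nonneg _) hρm
  apply selfadj_opNorm_le (E := EuclideanSpace ℝ (Fin n)) _
    (fun v w => by
      simp only [ContinuousLinearMap.sub_apply, ContinuousLinearMap.id_apply,
        ContinuousLinearMap.smul_apply, inner_sub_left, inner_sub_right,
        real_inner_smul_left, real_inner_smul_right, P.hess_symm x t]) ρ hρ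
  · intro v
    have h1 := P.strong_convex x t v
    have h2 := P.inner_hess_le x t v
    have hq : @inner ℝ _ _ ((ContinuousLinearMap.id ℝ (EuclideanSpace ℝ (Fin n))
        - γ • P.hess x t) v) v = ‖v‖ ^ 2 - γ * @inner ℝ _ _ v (P.hess x t v) := by
      simp only [ContinuousLinearMap.sub_apply, ContinuousLinearMap.id_apply,
        ContinuousLinearMap.smul_apply, inner_sub_left, real_inner_smul_left,
        real_inner_self_eq_norm_sq]
      rw [real_inner_comm]
    rw [hq, abs_le]
    have hm := (abs_le.mp hρm)
    have hL := (abs_le.mp hρL)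
    have hv : 0 ≤ ‖v‖ ^ 2 := sq_nonneg _
    constructor
    · nlinarith [hL.1, mul_nonneg hγ (sq_nonneg ‖v‖)]
    · nlinarith [hm.2]

lemma step_contract (γ ρ : ℝ) (hγ : 0 ≤ γ)
    (hρm : |1 - γ * P.m| ≤ ρ) (hρL : |1 - γ * P.L| ≤ ρ) (t : ℝ) (y : EE) :
    ‖(y - γ • P.grad y t) - P.xstar t‖ ≤ ρ * ‖y - P.xstar t‖ := by
  have key := convex_univ.norm_image_sub_le_of_norm_hasFDerivWithin_le
    (f := fun z : EuclideanSpace ℝ (Fin n) => z - γ • P.grad z t)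
    (f' := fun z => ContinuousLinearMap.id ℝ (EuclideanSpace ℝ (Fin n)) - γ • P.hess z t)
    (C := ρ) (x := P.xstar t) (y := y)
    (fun z _ => ((hasFDerivAt_id z).sub ((P.hess_spec z t).const_smul γ)).hasFDerivWithinAt)
    (fun z _ => P.contraction_op γ ρ hγ hρm hρL z t)
    (mem_univ _) (mem_univ _)
  have hx : P.xstar t - γ • P.grad (P.xstar t) t = P.xstar t := by
    rw [P.xstar_grad t]; simp
  rw [hx] at key
  exact key

lemma iter_contract (γ ρ : ℝ) (hγ : 0 ≤ γ) (hρ : 0 ≤ ρ)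
    (hρm : |1 - γ * P.m| ≤ ρ) (hρL : |1 - γ * P.L| ≤ ρ) (t : ℝ) (y : EE) (τ : ℕ) :
    ‖(fun z => z - γ • P.grad z t)^[τ] y - P.xstar t‖ ≤ ρ ^ τ * ‖y - P.xstar t‖ := by
  induction τ with
  | zero => simp
  | succ k ih =>
    rw [Function.iterate_succ_apply']
    calc ‖((fun z => z - γ • P.grad z t)^[k] y - γ • P.grad ((fun z => z - γ • P.grad z t)^[k] y) t) - P.xstar t‖
        ≤ ρ * ‖(fun z => z - γ • P.grad z t)^[k] y - P.xstar t‖ :=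
          P.step_contract γ ρ hγ hρm hρL t _
      _ ≤ ρ * (ρ ^ k * ‖y - P.xstar t‖) := by gcongr
      _ = ρ ^ (k + 1) * ‖y - P.xstar t‖ := by ring


-- Lipschitz bounds from derivative bounds
lemma hess_lip_x (t : ℝ) (x y : EE) : ‖P.hess y t - P.hess x t‖ ≤ P.C1 * ‖y - x‖ :=
  convex_univ.norm_image_sub_le_of_norm_hasFDerivWithin_le
    (fun z _ => (P.d3_spec z t).hasFDerivWithinAt)
    (fun z _ => P.d3_bound z t) (mem_univ x) (mem_univ y)

lemma hess_lip_t (x : EE) (t t' : ℝ) : ‖P.hess x t' - P.hess x t‖ ≤ P.C2 * |t' - t| := by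
  have := convex_univ.norm_image_sub_le_of_norm_hasDerivWithin_le
    (f := fun s => P.hess x s) (f' := fun s => P.dthess x s) (C := P.C2)
    (fun s _ => (P.dthess_spec x s).hasDerivWithinAt)
    (fun s _ => P.dthess_bound x s) (mem_univ t) (mem_univ t')
  simpa [Real.norm_eq_abs] using this

lemma grad_lip_t (x : EE) (t t' : ℝ) : ‖P.grad x t' - P.grad x t‖ ≤ P.C0 * |t' - t| := by
  have := convex_univ.norm_image_sub_le_of_norm_hasDerivWithin_le
    (f := fun s => P.grad x s) (f' := fun s => P.dtgrad x s) (C := P.C0)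
    (fun s _ => (P.dtgrad_spec x s).hasDerivWithinAt)
    (fun s _ => P.dtgrad_bound x s) (mem_univ t) (mem_univ t')
  simpa [Real.norm_eq_abs] using this

lemma dtgrad_lip_t (x : EE) (t t' : ℝ) : ‖P.dtgrad x t' - P.dtgrad x t‖ ≤ P.C3 * |t' - t| := by
  have := convex_univ.norm_image_sub_le_of_norm_hasDerivWithin_le
    (f := fun s => P.dtgrad x s) (f' := fun s => P.dttgrad x s) (C := P.C3)
    (fun s _ => (P.dttgrad_spec x s).hasDerivWithinAt)
    (fun s _ => P.dttgrad_bound x s) (mem_univ t) (mem_univ t')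
  simpa [Real.norm_eq_abs] using this

-- Taylor expansions
lemma taylor_t (x : EE) (t s : ℝ) :
    ‖P.grad x (t + s) - P.grad x t - s • P.dtgrad x t‖ ≤ P.C3 * s ^ 2 / 2 := by
  have hcurve : ∀ r : ℝ, HasDerivAt (fun r : ℝ => t + r * s) s r := by
    intro r; simpa using ((hasDerivAt_id r).mul_const s).const_add t
  have hder : ∀ r : ℝ, HasDerivAt (fun r => P.grad x (t + r * s))
      (s • P.dtgrad x (t + r * s)) r := by
    intro r
    exact (P.dtgrad_spec x (t + r * s)).scomp r (hcurve r)
  have key := quad01 (fun r => P.grad x (t + r * s))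
      (fun r => s • P.dtgrad x (t + r * s)) hder (P.C3 * s ^ 2) ?_
  · have e1 : t + 1 * s = t + s := by ring
    have e0 : t + 0 * s = t := by ring
    rw [e1, e0] at key
    calc ‖P.grad x (t + s) - P.grad x t - s • P.dtgrad x t‖ ≤ P.C3 * s ^ 2 / 2 := key
      _ = P.C3 * s ^ 2 / 2 := rfl
  · intro r hr
    simp only [zero_mul, add_zero]
    rw [← smul_sub, norm_smul, Real.norm_eq_abs]
    have h1 : ‖P.dtgrad x (t + r * s) - P.dtgrad x t‖ ≤ P.C3 * |r * s| := by
      simpa using P.dtgrad_lip_t x t (t + r * s)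
    calc |s| * ‖P.dtgrad x (t + r * s) - P.dtgrad x t‖ ≤ |s| * (P.C3 * |r * s|) := by
          gcongr
      _ = P.C3 * (|r| * (|s| * |s|)) := by rw [abs_mul]; ring
      _ = P.C3 * s ^ 2 * r := by
          rw [abs_of_nonneg hr.1, ← sq_abs s]; ring
      
lemma taylor_x (x u : EE) (t : ℝ) :
    ‖P.grad (x + u) t - P.grad x t - P.hess x t u‖ ≤ P.C1 * ‖u‖ ^ 2 / 2 := by
  have hcurve : ∀ r : ℝ, HasDerivAt (fun r : ℝ => x + r • u) u r := by
    intro r; simpa using ((hasDerivAt_id r).smul_const u).const_add x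
  have hder : ∀ r : ℝ, HasDerivAt (fun r => P.grad (x + r • u) t)
      (P.hess (x + r • u) t u) r := by
    intro r
    exact (P.hess_spec (x + r • u) t).comp_hasDerivAt r (hcurve r)
  have key := quad01 (fun r => P.grad (x + r • u) t)
      (fun r => P.hess (x + r • u) t u) hder (P.C1 * ‖u‖ ^ 2) ?_
  · have e1 : x + (1:ℝ) • u = x + u := by simp
    have e0 : x + (0:ℝ) • u = x := by simp
    rw [e1, e0] at key
    exact key
  · intro r hr
    simp only [zero_smul, add_zero]
    have h1 : ‖P.hess (x + r • u) t - P.hess x t‖ ≤ P.C1 * ‖r • u‖ := by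
      simpa using P.hess_lip_x t x (x + r • u)
    calc ‖P.hess (x + r • u) t u - P.hess x t u‖
        = ‖(P.hess (x + r • u) t - P.hess x t) u‖ := by
          simp [ContinuousLinearMap.sub_apply]
      _ ≤ ‖P.hess (x + r • u) t - P.hess x t‖ * ‖u‖ :=
          (P.hess (x + r • u) t - P.hess x t).le_opNorm u
      _ ≤ P.C1 * ‖r • u‖ * ‖u‖ := by gcongr
      _ = P.C1 * ‖u‖ ^ 2 * r := by
          rw [norm_smul, Real.norm_eq_abs, abs_of_nonneg hr.1]; ring


lemma strong_mono (t : ℝ) (x y : EE) :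
    P.m * ‖y - x‖ ^ 2 ≤ @inner ℝ _ _ (y - x) (P.grad y t - P.grad x t) := by
  classical
  set u : EE := y - x with hu
  set L : EuclideanSpace ℝ (Fin n) →L[ℝ] ℝ := innerSL ℝ u with hL
  have hcurve : ∀ r : ℝ, HasDerivAt (fun r : ℝ => x + r • u) u r := by
    intro r; simpa using ((hasDerivAt_id r).smul_const u).const_add x
  set φ : ℝ → ℝ := fun r => L (P.grad (x + r • u) t) - r * (P.m * ‖u‖ ^ 2) with hφ
  have hder : ∀ r : ℝ, HasDerivAt φ (L (P.hess (x + r • u) t u) - P.m * ‖u‖ ^ 2) r := by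
    intro r
    have h1 : HasDerivAt (fun r : ℝ => L (P.grad (x + r • u) t))
        (L (P.hess (x + r • u) t u)) r := by
      have := (L.hasFDerivAt.comp (x + r • u) (P.hess_spec (x + r • u) t)).comp_hasDerivAt
        r (hcurve r)
      exact this
    have h2 : HasDerivAt (fun r : ℝ => r * (P.m * ‖u‖ ^ 2)) (P.m * ‖u‖ ^ 2) r := by
      simpa using (hasDerivAt_id r).mul_const (P.m * ‖u‖ ^ 2)
    exact h1.sub h2
  have hmono : Monotone φ := by
    apply monotone_of_deriv_nonneg
    · exact fun r => (hder r).differentiableAt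
    · intro r
      rw [(hder r).deriv]
      have := P.strong_convex (x + r • u) t u
      have hLu : L (P.hess (x + r • u) t u) = @inner ℝ _ _ u (P.hess (x + r • u) t u) := by
        simp [hL]
      rw [hLu]; linarith
  have h01 := hmono (by norm_num : (0:ℝ) ≤ 1)
  have e1 : x + (1:ℝ) • u = y := by simp [hu]
  have e0 : x + (0:ℝ) • u = x := by simp
  simp only [hφ, e1, e0, one_mul, zero_mul, sub_zero] at h01
  have : @inner ℝ _ _ u (P.grad y t - P.grad x t) = L (P.grad y t) - L (P.grad x t) := by
    simp [hL, inner_sub_right]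
  rw [hu] at this ⊢
  rw [this]
  linarith

lemma grad_lower (t : ℝ) (y : EE) : P.m * ‖y - P.xstar t‖ ≤ ‖P.grad y t‖ := by
  rcases eq_or_ne y (P.xstar t) with h | h
  · simp [h]
  · have h1 := P.strong_mono t (P.xstar t) y
    rw [P.xstar_grad t, sub_zero] at h1
    have h2 : @inner ℝ _ _ (y - P.xstar t) (P.grad y t)
        ≤ ‖y - P.xstar t‖ * ‖P.grad y t‖ := real_inner_le_norm _ _
    have h3 : (0:ℝ) < ‖y - P.xstar t‖ := by
      rw [norm_pos_iff, sub_ne_zero]; exact h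
    nlinarith

lemma hess_lower (x : EE) (t : ℝ) (v : EE) : P.m * ‖v‖ ≤ ‖P.hess x t v‖ := by
  rcases eq_or_ne v 0 with h | h
  · simp [h]
  · have h1 := P.strong_convex x t v
    have h2 : @inner ℝ _ _ v (P.hess x t v) ≤ ‖v‖ * ‖P.hess x t v‖ := real_inner_le_norm _ _
    have h3 : (0:ℝ) < ‖v‖ := norm_pos_iff.mpr h
    nlinarith

lemma hess_hessInv (x : EE) (t : ℝ) (w : EE) : P.hess x t (P.hessInv x t w) = w := by
  have := congrArg (fun L : EuclideanSpace ℝ (Fin n) →L[ℝ] EuclideanSpace ℝ (Fin n) => L w)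
    (P.hessInv_right x t)
  simpa using this

lemma hessInv_hess (x : EE) (t : ℝ) (w : EE) : P.hessInv x t (P.hess x t w) = w := by
  have := congrArg (fun L : EuclideanSpace ℝ (Fin n) →L[ℝ] EuclideanSpace ℝ (Fin n) => L w)
    (P.hessInv_left x t)
  simpa using this

lemma hessInv_norm (x : EE) (t : ℝ) (w : EE) : ‖P.hessInv x t w‖ ≤ P.m⁻¹ * ‖w‖ := by
  have h1 := P.hess_lower x t (P.hessInv x t w)
  rw [P.hess_hessInv] at h1
  have hm := P.m_pos
  calc ‖P.hessInv x t w‖ = P.m⁻¹ * (P.m * ‖P.hessInv x t w‖) := by field_simp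
    _ ≤ P.m⁻¹ * ‖w‖ := by gcongr

lemma hessInv_diff (t : ℝ) (x y : EE) (w : EE) :
    ‖P.hessInv y t w - P.hessInv x t w‖ ≤ P.C1 / P.m ^ 2 * ‖y - x‖ * ‖w‖ := by
  have key : P.hessInv y t w - P.hessInv x t w
      = P.hessInv y t ((P.hess x t - P.hess y t) (P.hessInv x t w)) := by
    rw [ContinuousLinearMap.sub_apply, map_sub, P.hess_hessInv, P.hessInv_hess]
  rw [key]
  calc ‖P.hessInv y t ((P.hess x t - P.hess y t) (P.hessInv x t w))‖
      ≤ P.m⁻¹ * ‖(P.hess x t - P.hess y t) (P.hessInv x t w)‖ := P.hessInv_norm _ _ _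
    _ ≤ P.m⁻¹ * (‖P.hess x t - P.hess y t‖ * ‖P.hessInv x t w‖) := by
        have hm : (0:ℝ) ≤ P.m⁻¹ := le_of_lt (inv_pos.mpr P.m_pos)
        exact mul_le_mul_of_nonneg_left ((P.hess x t - P.hess y t).le_opNorm _) hm
    _ ≤ P.m⁻¹ * ((P.C1 * ‖y - x‖) * (P.m⁻¹ * ‖w‖)) := by
        have hm : (0:ℝ) ≤ P.m⁻¹ := le_of_lt (inv_pos.mpr P.m_pos)
        have h1 : ‖P.hess x t - P.hess y t‖ ≤ P.C1 * ‖y - x‖ := by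
          have := P.hess_lip_x t y x
          rwa [norm_sub_rev x y] at this
        have h2 := P.hessInv_norm x t w
        have h3 : (0:ℝ) ≤ ‖P.hess x t - P.hess y t‖ := norm_nonneg _
        exact mul_le_mul_of_nonneg_left
          (mul_le_mul h1 h2 (norm_nonneg _) (by
            have := P.C1_nonneg
            positivity)) hm
    _ = P.C1 / P.m ^ 2 * ‖y - x‖ * ‖w‖ := by
        field_simp


lemma fd_bound (t h : ℝ) (hh : 0 < h) (z : EE) :
    ‖h⁻¹ • (P.grad z t - P.grad z (t - h))‖ ≤ P.C0 := by
  rw [norm_smul, Real.norm_eq_abs, abs_of_pos (inv_pos.mpr hh)]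
  have h1 : ‖P.grad z t - P.grad z (t - h)‖ ≤ P.C0 * h := by
    have := P.grad_lip_t z (t - h) t
    simpa [abs_of_pos hh] using this
  calc h⁻¹ * ‖P.grad z t - P.grad z (t - h)‖ ≤ h⁻¹ * (P.C0 * h) := by
        gcongr
    _ = P.C0 := by field_simp
    
lemma fd_err (t h : ℝ) (hh : 0 < h) (z : EE) :
    ‖h⁻¹ • (P.grad z t - P.grad z (t - h)) - P.dtgrad z t‖ ≤ P.C3 * h / 2 := by
  have htay := P.taylor_t z t (-h)
  have e1 : t + -h = t - h := by ring
  rw [e1] at htay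
  have e2 : h⁻¹ • (P.grad z t - P.grad z (t - h)) - P.dtgrad z t
      = -(h⁻¹ • (P.grad z (t - h) - P.grad z t - (-h) • P.dtgrad z t)) := by
    have hne : h ≠ 0 := ne_of_gt hh
    rw [smul_sub, smul_sub, smul_sub, smul_smul]
    rw [show h⁻¹ * -h = -1 by field_simp, neg_one_smul]
    abel
  rw [e2, norm_neg, norm_smul, Real.norm_eq_abs, abs_of_pos (inv_pos.mpr hh)]
  calc h⁻¹ * ‖P.grad z (t - h) - P.grad z t - (-h) • P.dtgrad z t‖
      ≤ h⁻¹ * (P.C3 * (-h) ^ 2 / 2) := by gcongr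
    _ = P.C3 * h / 2 := by field_simp

lemma fd_lip (t h : ℝ) (hh : 0 < h) (x y : EE) :
    ‖h⁻¹ • (P.grad y t - P.grad y (t - h)) - h⁻¹ • (P.grad x t - P.grad x (t - h))‖
      ≤ P.C2 * ‖y - x‖ := by
  apply convex_univ.norm_image_sub_le_of_norm_hasFDerivWithin_le
    (f := fun z : EuclideanSpace ℝ (Fin n) => h⁻¹ • (P.grad z t - P.grad z (t - h)))
    (f' := fun z => h⁻¹ • (P.hess z t - P.hess z (t - h)))
    (fun z _ => (((P.hess_spec z t).sub (P.hess_spec z (t - h))).const_smul h⁻¹).hasFDerivWithinAt)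
    ?_ (mem_univ x) (mem_univ y)
  intro z _
  rw [norm_smul, Real.norm_eq_abs, abs_of_pos (inv_pos.mpr hh)]
  have h1 : ‖P.hess z t - P.hess z (t - h)‖ ≤ P.C2 * h := by
    have := P.hess_lip_t z (t - h) t
    simpa [abs_of_pos hh] using this
  calc h⁻¹ * ‖P.hess z t - P.hess z (t - h)‖ ≤ h⁻¹ * (P.C2 * h) := by gcongr
    _ = P.C2 := by field_simp

/-- Key prediction bound. -/
lemma pred_bound (t h : ℝ) (hh : 0 < h) (y : EE) :
    ‖(y - h • P.hessInv y t (h⁻¹ • (P.grad y t - P.grad y (t - h)))) - P.xstar (t + h)‖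
      ≤ (1 + h * (P.C0 * P.C1 / P.m ^ 2 + P.C2 / P.m)) * ‖y - P.xstar t‖
        + h ^ 2 / 2 * (P.C0 ^ 2 * P.C1 / P.m ^ 3 + 2 * P.C0 * P.C2 / P.m ^ 2
          + 2 * P.C3 / P.m) := by
  have hm := P.m_pos
  have hminv : (0:ℝ) < P.m⁻¹ := inv_pos.mpr hm
  have hC0 := P.C0_nonneg; have hC1 := P.C1_nonneg
  have hC2 := P.C2_nonneg; have hC3 := P.C3_nonneg
  set X := P.xstar t with hX
  set g := P.dtgrad X t with hg
  set u : EuclideanSpace ℝ (Fin n) := -(h • P.hessInv X t g) with hu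
  set D : EuclideanSpace ℝ (Fin n) → EuclideanSpace ℝ (Fin n) :=
    fun z => h⁻¹ • (P.grad z t - P.grad z (t - h)) with hD
  -- norm of u
  have norm_u : ‖u‖ ≤ h * (P.m⁻¹ * P.C0) := by
    rw [hu, norm_neg, norm_smul, Real.norm_eq_abs, abs_of_pos hh]
    have h1 := P.hessInv_norm X t g
    have h2 := P.dtgrad_bound X t
    calc h * ‖P.hessInv X t g‖ ≤ h * (P.m⁻¹ * ‖g‖) := by gcongr
      _ ≤ h * (P.m⁻¹ * P.C0) := by gcongr
  -- step (a): ideal prediction from X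
  have T0 : P.grad X t + P.hess X t u + h • g = 0 := by
    rw [hu, map_neg, map_smul, P.hess_hessInv, hX, P.xstar_grad]
    abel
  have hsum : P.grad (X + u) (t + h) =
      (P.grad (X + u) (t + h) - P.grad X (t + h) - P.hess X (t + h) u)
      + ((P.hess X (t + h)) u - (P.hess X t) u)
      + (P.grad X (t + h) - P.grad X t - h • g)
      + (P.grad X t + P.hess X t u + h • g) := by abel
  have hgradz : ‖P.grad (X + u) (t + h)‖
      ≤ P.C1 * ‖u‖ ^ 2 / 2 + P.C2 * h * ‖u‖ + P.C3 * h ^ 2 / 2 := by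
    rw [hsum, T0, add_zero]
    have b1 := P.taylor_x X u (t + h)
    have b2 : ‖(P.hess X (t + h)) u - (P.hess X t) u‖ ≤ P.C2 * h * ‖u‖ := by
      calc ‖(P.hess X (t + h)) u - (P.hess X t) u‖
          = ‖(P.hess X (t + h) - P.hess X t) u‖ := by
            simp [ContinuousLinearMap.sub_apply]
        _ ≤ ‖P.hess X (t + h) - P.hess X t‖ * ‖u‖ :=
            (P.hess X (t + h) - P.hess X t).le_opNorm u
        _ ≤ (P.C2 * h) * ‖u‖ := by
            have := P.hess_lip_t X t (t + h)
            have e : |t + h - t| = h := by rw [show t + h - t = h by ring, abs_of_pos hh]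
            rw [e] at this
            gcongr
        _ = P.C2 * h * ‖u‖ := by ring
    have b3 : ‖P.grad X (t + h) - P.grad X t - h • g‖ ≤ P.C3 * h ^ 2 / 2 := P.taylor_t X t h
    calc ‖(P.grad (X + u) (t + h) - P.grad X (t + h) - P.hess X (t + h) u)
        + ((P.hess X (t + h)) u - (P.hess X t) u)
        + (P.grad X (t + h) - P.grad X t - h • g)‖
        ≤ ‖P.grad (X + u) (t + h) - P.grad X (t + h) - P.hess X (t + h) u‖
          + ‖(P.hess X (t + h)) u - (P.hess X t) u‖
          + ‖P.grad X (t + h) - P.grad X t - h • g‖ := by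
          exact norm_add₃_le
      _ ≤ P.C1 * ‖u‖ ^ 2 / 2 + P.C2 * h * ‖u‖ + P.C3 * h ^ 2 / 2 := by gcongr
  have za : ‖(X + u) - P.xstar (t + h)‖
      ≤ P.m⁻¹ * (P.C1 * (h * (P.m⁻¹ * P.C0)) ^ 2 / 2 + P.C2 * h * (h * (P.m⁻¹ * P.C0))
        + P.C3 * h ^ 2 / 2) := by
    have h1 := P.grad_lower (t + h) (X + u)
    have h2 : ‖P.grad (X + u) (t + h)‖
        ≤ P.C1 * (h * (P.m⁻¹ * P.C0)) ^ 2 / 2 + P.C2 * h * (h * (P.m⁻¹ * P.C0))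
          + P.C3 * h ^ 2 / 2 := by
      refine le_trans hgradz ?_
      gcongr
    calc ‖(X + u) - P.xstar (t + h)‖
        = P.m⁻¹ * (P.m * ‖(X + u) - P.xstar (t + h)‖) := by field_simp
      _ ≤ P.m⁻¹ * ‖P.grad (X + u) (t + h)‖ := by gcongr
      _ ≤ _ := by gcongr
  -- step (b)
  have zb : ‖(X - h • P.hessInv X t (D X)) - (X + u)‖ ≤ h * (P.m⁻¹ * (P.C3 * h / 2)) := by
    have e : (X - h • P.hessInv X t (D X)) - (X + u)
        = -(h • P.hessInv X t (D X - g)) := by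
      rw [hu, map_sub]
      rw [smul_sub]
      abel
    rw [e, norm_neg, norm_smul, Real.norm_eq_abs, abs_of_pos hh]
    have h1 := P.hessInv_norm X t (D X - g)
    have h2 : ‖D X - g‖ ≤ P.C3 * h / 2 := P.fd_err t h hh X
    calc h * ‖P.hessInv X t (D X - g)‖ ≤ h * (P.m⁻¹ * ‖D X - g‖) := by gcongr
      _ ≤ h * (P.m⁻¹ * (P.C3 * h / 2)) := by gcongr
  -- step (c)
  have zc : ‖(y - h • P.hessInv y t (D y)) - (X - h • P.hessInv X t (D X))‖
      ≤ (1 + h * (P.C0 * P.C1 / P.m ^ 2 + P.C2 / P.m)) * ‖y - X‖ := by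
    have e : (y - h • P.hessInv y t (D y)) - (X - h • P.hessInv X t (D X))
        = (y - X) - h • (P.hessInv y t (D y - D X))
          - h • (P.hessInv y t (D X) - P.hessInv X t (D X)) := by
      rw [map_sub, smul_sub, smul_sub]
      abel
    rw [e]
    have c1 : ‖P.hessInv y t (D y - D X)‖ ≤ P.m⁻¹ * (P.C2 * ‖y - X‖) := by
      refine le_trans (P.hessInv_norm y t _) ?_
      gcongr
      exact P.fd_lip t h hh X y
    have c2 : ‖P.hessInv y t (D X) - P.hessInv X t (D X)‖
        ≤ P.C1 / P.m ^ 2 * ‖y - X‖ * P.C0 := by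
      refine le_trans (P.hessInv_diff t X y (D X)) ?_
      have := P.fd_bound t h hh X
      gcongr
    calc ‖(y - X) - h • (P.hessInv y t (D y - D X))
          - h • (P.hessInv y t (D X) - P.hessInv X t (D X))‖
        ≤ ‖y - X‖ + ‖h • (P.hessInv y t (D y - D X))‖
          + ‖h • (P.hessInv y t (D X) - P.hessInv X t (D X))‖ := by
          exact norm_sub_le_of_le (norm_sub_le _ _) le_rfl
      _ ≤ ‖y - X‖ + h * (P.m⁻¹ * (P.C2 * ‖y - X‖)) + h * (P.C1 / P.m ^ 2 * ‖y - X‖ * P.C0) := by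
          rw [norm_smul, norm_smul, Real.norm_eq_abs, abs_of_pos hh]
          gcongr
      _ = (1 + h * (P.C0 * P.C1 / P.m ^ 2 + P.C2 / P.m)) * ‖y - X‖ := by
          field_simp; ring
  -- combine
  have tri : ‖(y - h • P.hessInv y t (D y)) - P.xstar (t + h)‖
      ≤ ‖(y - h • P.hessInv y t (D y)) - (X - h • P.hessInv X t (D X))‖
        + ‖(X - h • P.hessInv X t (D X)) - (X + u)‖
        + ‖(X + u) - P.xstar (t + h)‖ := by
    calc ‖(y - h • P.hessInv y t (D y)) - P.xstar (t + h)‖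
        = ‖((y - h • P.hessInv y t (D y)) - (X - h • P.hessInv X t (D X)))
          + ((X - h • P.hessInv X t (D X)) - (X + u))
          + ((X + u) - P.xstar (t + h))‖ := by congr 1; abel
      _ ≤ _ := norm_add₃_le
  refine le_trans tri ?_
  have final : (1 + h * (P.C0 * P.C1 / P.m ^ 2 + P.C2 / P.m)) * ‖y - X‖
        + h * (P.m⁻¹ * (P.C3 * h / 2))
        + P.m⁻¹ * (P.C1 * (h * (P.m⁻¹ * P.C0)) ^ 2 / 2 + P.C2 * h * (h * (P.m⁻¹ * P.C0))
          + P.C3 * h ^ 2 / 2)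
      = (1 + h * (P.C0 * P.C1 / P.m ^ 2 + P.C2 / P.m)) * ‖y - X‖
        + h ^ 2 / 2 * (P.C0 ^ 2 * P.C1 / P.m ^ 3 + 2 * P.C0 * P.C2 / P.m ^ 2
          + 2 * P.C3 / P.m) := by
    field_simp
    ring
  rw [← final]
  gcongr

end TVOpt



open TVOpt Set

/-- **Theorem 3, part ii.** If moreover `ρ^τ·σ < 1`, AGT converges
exponentially up to an `O(h²)` error. -/
theorem agt_convergence_small_period (n : ℕ) (hn : 0 < n) (P : TVOpt n) (h : ℝ) (hh : 0 < h)
    (γ : ℝ) (τ : ℕ) (hτ : 1 ≤ τ) (hγ0 : 0 < γ) (hγL : γ < 2 / P.L)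
    (ρ : ℝ) (hρ : ρ = max |1 - γ * P.m| |1 - γ * P.L|)
    (σ : ℝ) (hσ : σ = 1 + h * (P.C0 * P.C1 / P.m ^ 2 + P.C2 / P.m))
    (hsmall : ρ ^ τ * σ < 1)
    (x : ℕ → EuclideanSpace ℝ (Fin n))
    (hrec : ∀ k : ℕ, x (k + 1) =
      (fun y => y - γ • P.grad y (((k : ℝ) + 1) * h))^[τ]
        (x k - h • P.hessInv (x k) ((k : ℝ) * h)
          (h⁻¹ • (P.grad (x k) ((k : ℝ) * h) - P.grad (x k) ((k : ℝ) * h - h))))) :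
    ρ < 1 ∧ ∀ k : ℕ,
      ‖x k - P.xstar ((k : ℝ) * h)‖ ≤
        (ρ ^ τ * σ) ^ k * ‖x 0 - P.xstar 0‖ +
        ρ ^ τ * (h ^ 2 / 2) *
          (P.C0 ^ 2 * P.C1 / P.m ^ 3 + 2 * P.C0 * P.C2 / P.m ^ 2 + 2 * P.C3 / P.m) *
          ((1 - (ρ ^ τ * σ) ^ k) / (1 - ρ ^ τ * σ)) := by
  
  have hm := P.m_pos
  have hmL := P.m_le_L hn
  have hL : 0 < P.L := lt_of_lt_of_le hm hmL
  have hγL2 : γ * P.L < 2 := by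
    rw [lt_div_iff₀ hL] at hγL; linarith
  have hγm0 : 0 < γ * P.m := mul_pos hγ0 hm
  have hγmL : γ * P.m ≤ γ * P.L := by
    have := hγ0.le; gcongr
  have hρm : |1 - γ * P.m| < 1 := abs_lt.mpr ⟨by linarith, by linarith⟩
  have hρL : |1 - γ * P.L| < 1 := abs_lt.mpr ⟨by linarith, by linarith⟩
  have hρ1 : ρ < 1 := by rw [hρ]; exact max_lt hρm hρL
  have hρ0 : 0 ≤ ρ := by
    rw [hρ]; exact le_trans (abs_nonneg _) (le_max_left _ _)
  have hρmle : |1 - γ * P.m| ≤ ρ := by rw [hρ]; exact le_max_left _ _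
  have hρLle : |1 - γ * P.L| ≤ ρ := by rw [hρ]; exact le_max_right _ _
  have hC0 := P.C0_nonneg; have hC1 := P.C1_nonneg
  have hC2 := P.C2_nonneg; have hC3 := P.C3_nonneg
  refine ⟨hρ1, ?_⟩
  set Δ : ℝ := P.C0 ^ 2 * P.C1 / P.m ^ 3 + 2 * P.C0 * P.C2 / P.m ^ 2 + 2 * P.C3 / P.m with hΔ
  have hΔ0 : 0 ≤ Δ := by rw [hΔ]; positivity
  set A : ℝ := ρ ^ τ * σ with hA
  set B : ℝ := ρ ^ τ * (h ^ 2 / 2) * Δ with hB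
  have hσ1 : 1 ≤ σ := by
    rw [hσ]; nlinarith [mul_nonneg hh.le (by positivity : (0:ℝ) ≤ P.C0 * P.C1 / P.m ^ 2 + P.C2 / P.m)]
  have hA0 : 0 ≤ A := by
    rw [hA]; exact mul_nonneg (pow_nonneg hρ0 τ) (by linarith)
  have hA1 : A < 1 := hsmall
  have hB0 : 0 ≤ B := by rw [hB]; positivity
  -- one-step bound
  have onestep : ∀ k : ℕ, ‖x (k + 1) - P.xstar (((k : ℝ) + 1) * h)‖
      ≤ A * ‖x k - P.xstar ((k : ℝ) * h)‖ + B := by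
    intro k
    rw [hrec k]
    have et : ((k : ℝ) + 1) * h = (k : ℝ) * h + h := by ring
    have step1 := P.iter_contract γ ρ hγ0.le hρ0 hρmle hρLle (((k : ℝ) + 1) * h)
      (x k - h • P.hessInv (x k) ((k : ℝ) * h)
        (h⁻¹ • (P.grad (x k) ((k : ℝ) * h) - P.grad (x k) ((k : ℝ) * h - h)))) τ
    refine le_trans step1 ?_
    have step2 := P.pred_bound ((k : ℝ) * h) h hh (x k)
    rw [← et, ← hσ] at step2
    calc ρ ^ τ * ‖(x k - h • P.hessInv (x k) ((k : ℝ) * h)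
          (h⁻¹ • (P.grad (x k) ((k : ℝ) * h) - P.grad (x k) ((k : ℝ) * h - h))))
          - P.xstar (((k : ℝ) + 1) * h)‖
        ≤ ρ ^ τ * (σ * ‖x k - P.xstar ((k : ℝ) * h)‖ + h ^ 2 / 2 * Δ) := by
          have hρτ : (0:ℝ) ≤ ρ ^ τ := pow_nonneg hρ0 τ
          exact mul_le_mul_of_nonneg_left step2 hρτ
      _ = A * ‖x k - P.xstar ((k : ℝ) * h)‖ + B := by rw [hA, hB]; ring
  -- induction
  intro k
  induction k with
  | zero =>
    simp only [Nat.cast_zero, zero_mul, pow_zero, one_mul, sub_self, zero_div, mul_zero, add_zero]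
    exact le_rfl
  | succ k ih =>
    have step := onestep k
    have hcast : ((k + 1 : ℕ) : ℝ) = (k : ℝ) + 1 := by push_cast; ring
    rw [hcast]
    have hA1' : (0:ℝ) < 1 - A := by linarith
    calc ‖x (k + 1) - P.xstar (((k : ℝ) + 1) * h)‖
        ≤ A * ‖x k - P.xstar ((k : ℝ) * h)‖ + B := step
      _ ≤ A * (A ^ k * ‖x 0 - P.xstar 0‖ + B * ((1 - A ^ k) / (1 - A))) + B := by
          have h2 := mul_le_mul_of_nonneg_left ih hA0
          linarith
      _ = A ^ (k + 1) * ‖x 0 - P.xstar 0‖ + B * ((1 - A ^ (k + 1)) / (1 - A)) := by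
          field_simp
          ring
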